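/- Base change move BC1: If (α_n)_{n≥0}, (β_n)_{n≥0} form a Bailey pair with respect to base a, where a q^m ≠ 1 for all m ≥ 0, then the sequences β'_n = Σ_{j=0}^{n} (a^j q^{j²−j} / (q;q)_{n−j}) β_j and α'_n defined by α'_0 = α_0 and, for n ≥ 1, α'_n = a^n q^{n²−n} (α̃_n − a q^{2n−2} α̃_{n−1}), form a Bailey pair with respect to base a q^{−1}, where α̃_n = ((1 − a)/(1 − a q^{2n})) α_n. -/

import Mathlib

open Finset

noncomputable def qPoch (a q : ℂ) (n : ℕ) : ℂ :=
  ∏ t ∈ Finset.range n, (1 - a * q ^ t)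

noncomputable def qPochInf (a q : ℂ) : ℂ :=
  ∏' t : ℕ, (1 - a * q ^ t)

def IsBaileyPair (q a : ℂ) (α β : ℕ → ℂ) : Prop :=
  ∀ n : ℕ, β n =
    ∑ t ∈ Finset.range (n + 1), α t / (qPoch q q (n - t) * qPoch (a * q) q (n + t))


lemma qPoch_zero (a q : ℂ) : qPoch a q 0 = 1 := by simp [qPoch]

lemma qPoch_succ (a q : ℂ) (n : ℕ) : qPoch a q (n+1) = qPoch a q n * (1 - a * q ^ n) := by
  simp [qPoch, Finset.prod_range_succ]

lemma qPoch_succ' (a q : ℂ) (n : ℕ) : qPoch a q (n+1) = (1 - a) * qPoch (a*q) q n := by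
  rw [qPoch, Finset.prod_range_succ']
  simp only [pow_zero, mul_one, qPoch]
  rw [mul_comm]
  congr 1
  apply Finset.prod_congr rfl
  intro t _
  ring

lemma qPoch_add (a q : ℂ) (u v : ℕ) : qPoch a q (u+v) = qPoch a q u * qPoch (a*q^u) q v := by
  rw [qPoch, Finset.prod_range_add]
  congr 1
  apply Finset.prod_congr rfl
  intro t _
  rw [mul_assoc, ← pow_add]

lemma qPoch_ne_zero (a q : ℂ) (n : ℕ) (h : ∀ k : ℕ, 1 - a * q ^ k ≠ 0) : qPoch a q n ≠ 0 :=
  Finset.prod_ne_zero_iff.mpr fun t _ => h t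


lemma alg2 (b q c P T C : ℂ) (hP : P ≠ 0) (hT : T ≠ 0) (hC : C ≠ 0)
    (h1 : 1 - b*q ≠ 0) (h2 : 1 - b*q*c ≠ 0) (h3 : 1 - q*c ≠ 0)
    (hrel : T * (1 - b*q*c) = (1-b*q) * C) :
    ((1 + b - b*c)/(P*T) + b*c/(1-b*q) * ((1+b*q-b*q*c)/(P*C))) / (1 - q*c)
      = (1 + b - b*(q*c)) / (P*(1-q*c) * (T*(1-b*q*c))) := by
  rw [div_eq_div_iff h3 (mul_ne_zero (mul_ne_zero hP h3) (mul_ne_zero hT h2))]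
  rw [div_eq_mul_inv (1 + b - b*c), div_mul_div_comm, div_eq_mul_inv (b*c*(1+b*q-b*q*c))]
  have i1 : (P*T) * (P*T)⁻¹ = 1 := mul_inv_cancel₀ (mul_ne_zero hP hT)
  have i2 : ((1-b*q)*(P*C)) * ((1-b*q)*(P*C))⁻¹ = 1 :=
    mul_inv_cancel₀ (mul_ne_zero h1 (mul_ne_zero hP hC))
  linear_combination ((1+b-b*c)*(1-q*c)*(1-b*q*c)) * i1
    + (b*c*(1+b*q-b*q*c)*(1-q*c)) * i2
    + (b*c*(1+b*q-b*q*c)*(1-q*c)*P*((1-b*q)*(P*C))⁻¹) * hrel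


lemma key (q : ℂ) (hq : ∀ k : ℕ, 1 - q ^ (k+1) ≠ 0) (m : ℕ) :
    ∀ b : ℂ, (∀ k : ℕ, 1 - b * q ^ (k+1) ≠ 0) →
    ∑ i ∈ Finset.range (m+1),
        b^i * q^(i^2 - i) / (qPoch q q i * qPoch q q (m - i) * qPoch (b*q) q i)
      = (1 + b - b * q^m) / (qPoch q q m * qPoch (b*q) q m) := by
  induction m with
  | zero =>
    intro b hb
    simp [qPoch_zero]
  | succ m ih =>
    intro b hb
    have hqprod : ∀ k : ℕ, qPoch q q k ≠ 0 := by
      intro k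
      apply qPoch_ne_zero
      intro t
      have := hq t
      rwa [pow_succ'] at this
    have hb' : ∀ k : ℕ, 1 - (b*q) * q ^ (k+1) ≠ 0 := by
      intro k
      have := hb (k+1)
      convert this using 2
      rw [pow_succ']
      ring
    have hbprod : ∀ c : ℂ, (∀ k : ℕ, 1 - c * q ^ (k+1) ≠ 0) → ∀ k : ℕ, qPoch (c*q) q k ≠ 0 := by
      intro c hc k
      apply qPoch_ne_zero
      intro t
      have := hc t
      rw [pow_succ'] at this
      convert this using 2
      ring
    set t : ℕ → ℂ := fun i =>
      b^i * q^(i^2 - i) / (qPoch q q i * qPoch q q (m + 1 - i) * qPoch (b*q) q i) with ht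
    have hsum : (1 - q^(m+1)) * ∑ i ∈ Finset.range (m+2), t i
        = (∑ i ∈ Finset.range (m+2), (1 - q^(m+1-i)) * t i)
          + ∑ i ∈ Finset.range (m+2), (q^(m+1-i) * (1 - q^i)) * t i := by
      rw [Finset.mul_sum, ← Finset.sum_add_distrib]
      apply Finset.sum_congr rfl
      intro i hi
      have hp : q^(m+1-i) * q^i = q^(m+1) := by
        rw [← pow_add]
        congr 1
        have : i ≤ m + 1 := by simpa [Nat.lt_succ_iff] using hi
        omega
      linear_combination (t i) * hp
    have hA : ∑ i ∈ Finset.range (m+2), (1 - q^(m+1-i)) * t i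
        = ∑ i ∈ Finset.range (m+1),
            b^i * q^(i^2 - i) / (qPoch q q i * qPoch q q (m - i) * qPoch (b*q) q i) := by
      rw [Finset.sum_range_succ]
      simp only [Nat.sub_self, pow_zero, sub_self, zero_mul, add_zero]
      apply Finset.sum_congr rfl
      intro i hi
      have hile : i ≤ m := by simpa [Nat.lt_succ_iff] using hi
      have h1 : m + 1 - i = (m - i) + 1 := by omega
      rw [ht]
      simp only []
      rw [h1, qPoch_succ]
      have hc : (1 : ℂ) - q * q^(m-i) ≠ 0 := by
        have := hq (m-i); rwa [pow_succ'] at this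
      have hc2 : q ^ (m - i + 1) = q * q ^ (m - i) := by rw [pow_succ']
      rw [hc2]
      have e1 := hqprod i
      have e2 := hqprod (m-i)
      have e3 := hbprod b hb i
      field_simp
    have hB : ∑ i ∈ Finset.range (m+2), (q^(m+1-i) * (1 - q^i)) * t i
        = (b * q^m / (1 - b*q)) * ∑ j ∈ Finset.range (m+1),
            (b*q)^j * q^(j^2 - j) / (qPoch q q j * qPoch q q (m - j) * qPoch ((b*q)*q) q j) := by
      rw [Finset.sum_range_succ']
      simp only [Nat.sub_zero, pow_zero, sub_self, mul_zero, zero_mul, add_zero]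
      rw [Finset.mul_sum]
      apply Finset.sum_congr rfl
      intro j hj
      have hjle : j ≤ m := by simpa [Nat.lt_succ_iff] using hj
      have h1 : m + 1 - (j+1) = m - j := by omega
      have h2 : (j+1)^2 - (j+1) = (j^2 - j) + 2*j := by
        have e1 : (j+1)^2 = j^2 + 2*j + 1 := by ring
        have e2 : j ≤ j^2 := Nat.le_self_pow (by norm_num) j
        omega
      rw [ht]
      simp only []
      rw [h1, h2, qPoch_succ q q j, qPoch_succ' (b*q) q j]
      have hc : (1 : ℂ) - q * q^j ≠ 0 := by
        have := hq j; rwa [pow_succ'] at this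
      have hbq : (1 : ℂ) - b * q ≠ 0 := by
        have := hb 0; simpa using this
      have hPj := hqprod j
      have hPmj := hqprod (m - j)
      have hQ := hbprod (b*q) hb' j
      rw [show q^m = q^(m-j) * q^j by rw [← pow_add]; congr 1; omega]
      field_simp
      ring
    have hq1 : (1 : ℂ) - q^(m+1) ≠ 0 := hq m
    have hbq : (1 : ℂ) - b * q ≠ 0 := by have := hb 0; simpa using this
    have ih1 := ih b hb
    have ih2 := ih (b*q) hb'
    have heq : ∑ i ∈ Finset.range (m+2), t i
        = ((1 + b - b * q^m) / (qPoch q q m * qPoch (b*q) q m)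
          + (b * q^m / (1 - b*q)) * ((1 + b*q - (b*q) * q^m) / (qPoch q q m * qPoch ((b*q)*q) q m)))
          / (1 - q^(m+1)) := by
      rw [eq_div_iff hq1, mul_comm, hsum, hA, hB, ih1, ih2]
    rw [heq]
    have hP := hqprod m
    have hT1 := hbprod b hb m
    have hT2 := hbprod (b*q) hb' m
    have hbqm : (1:ℂ) - (b*q) * q^m ≠ 0 := by
      have := hb m
      convert this using 2
      rw [pow_succ']
      ring
    have hqqm : (1:ℂ) - q * q^m ≠ 0 := by
      have := hq m; rwa [pow_succ'] at this
    have hrel : qPoch (b*q) q m * (1 - (b*q) * q^m) = (1 - b*q) * qPoch ((b*q)*q) q m := by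
      rw [← qPoch_succ, qPoch_succ']
    rw [qPoch_succ q q m, qPoch_succ (b*q) q m, pow_succ' q m]
    exact alg2 b q (q^m) _ _ _ hP hT1 hT2 hbq hbqm hqqm hrel


lemma alg3 (aa w z al K1 K2 P0 Q R S T : ℂ)
    (hQ : Q ≠ 0) (hP0 : P0 ≠ 0) (hR : R ≠ 0) (hS : S ≠ 0) (hT : T ≠ 0)
    (h1 : 1 - aa*w ≠ 0) (h2 : 1 - aa*w*z ≠ 0) (h3 : 1 - aa ≠ 0) (hz : 1 - z ≠ 0)
    (hR1 : R * (1 - aa*w) = (1-aa) * Q)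
    (hR2 : S * (1 - aa*w*z) = (1 - aa*w) * T) :
    al * (K1 * K2 / Q * ((1 + aa*w - aa*w*z) / (P0*(1-z) * T)))
      = K1 * K2 * ((1-aa)/(1-aa*w) * al) / (P0*(1-z) * (R*S))
        - K1*aa * (K2*w) * (aa*w * ((1-aa)/(1-aa*w) * al)) / (P0 * (R*(S*(1-aa*w*z)))) := by
  simp only [div_mul_eq_mul_div, ← mul_div_assoc, div_div, div_mul_div_comm]
  have hd1 : (1-aa*w) * (P0*(1-z)*(R*S)) ≠ 0 :=
    mul_ne_zero h1 (mul_ne_zero (mul_ne_zero hP0 hz) (mul_ne_zero hR hS))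
  have hd2 : (1-aa*w) * (P0*(R*(S*(1-aa*w*z)))) ≠ 0 :=
    mul_ne_zero h1 (mul_ne_zero hP0 (mul_ne_zero hR (mul_ne_zero hS h2)))
  have hdL : Q*(P0*(1-z)*T) ≠ 0 :=
    mul_ne_zero hQ (mul_ne_zero (mul_ne_zero hP0 hz) hT)
  rw [div_sub_div _ _ hd1 hd2, div_eq_div_iff hdL (mul_ne_zero hd1 hd2)]
  linear_combination (al*K1*K2*(1+aa*w-aa*w*z)*(1-aa*w)^2*P0^2*(1-z)*R*S*T) * hR1
    + (al*K1*K2*(1+aa*w-aa*w*z)*(1-aa*w)^2*P0^2*(1-z)*R*S*R) * hR2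

lemma alg4 (aa w al K1 K2 Q R : ℂ) (hQ : Q ≠ 0) (hR : R ≠ 0) (h1 : 1 - aa*w ≠ 0)
    (hR1 : R * (1 - aa*w) = (1-aa) * Q) :
    al * (K1 * K2 / Q * (1 + aa*w - aa*w)) = K1 * K2 * ((1-aa)/(1-aa*w) * al) / R := by
  simp only [div_mul_eq_mul_div, ← mul_div_assoc, div_div]
  rw [div_eq_div_iff hQ (mul_ne_zero h1 hR)]
  linear_combination (al*K1*K2) * hR1

set_option maxHeartbeats 1000000 in
theorem base_change_BC1 (q a : ℂ) (hq0 : 0 < ‖q‖) (hq1 : ‖q‖ < 1)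
    (ha : ∀ m : ℕ, a * q ^ m ≠ 1)
    (α β : ℕ → ℂ) (h : IsBaileyPair q a α β) :
    IsBaileyPair q (a * q⁻¹)
      (fun n => match n with
        | 0 => α 0
        | m + 1 => a ^ (m + 1) * q ^ ((m + 1) ^ 2 - (m + 1)) *
            ((1 - a) / (1 - a * q ^ (2 * (m + 1))) * α (m + 1) -
              a * q ^ (2 * m) * ((1 - a) / (1 - a * q ^ (2 * m)) * α m)))
      (fun n => ∑ j ∈ Finset.range (n + 1),
        a ^ j * q ^ (j ^ 2 - j) / qPoch q q (n - j) * β j) := by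
  intro n
  -- basic nonvanishing facts
  have hqne : q ≠ 0 := by
    intro hc; rw [hc] at hq0; simp at hq0
  have hq' : ∀ k : ℕ, 1 - q ^ (k+1) ≠ 0 := by
    intro k hc
    have h1 : ‖q ^ (k+1)‖ < 1 := by
      rw [norm_pow]
      exact pow_lt_one₀ (norm_nonneg q) hq1 (Nat.succ_ne_zero k)
    have h2 : q ^ (k+1) = 1 := by linear_combination -hc
    rw [h2] at h1
    simp at h1
  have hA : ∀ k : ℕ, 1 - a * q ^ k ≠ 0 := by
    intro k hc
    exact ha k (by linear_combination -hc)
  have hqprod : ∀ k : ℕ, qPoch q q k ≠ 0 := by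
    intro k
    apply qPoch_ne_zero
    intro t
    have := hq' t; rwa [pow_succ'] at this
  have hane : ∀ k, qPoch a q k ≠ 0 := fun k => qPoch_ne_zero _ _ _ hA
  have haqne : ∀ k, qPoch (a*q) q k ≠ 0 := by
    intro k
    apply qPoch_ne_zero
    intro t
    have := hA (t+1); rw [pow_succ'] at this
    convert this using 2; ring
  have hbne : ∀ s k : ℕ, qPoch (a*q^(2*s)) q k ≠ 0 := by
    intro s k
    apply qPoch_ne_zero
    intro t
    have := hA (2*s+t); rw [pow_add] at this
    convert this using 2; ring
  have hbqne : ∀ s k : ℕ, qPoch ((a*q^(2*s))*q) q k ≠ 0 := by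
    intro s k
    apply qPoch_ne_zero
    intro t
    have := hA (2*s+(t+1)); rw [pow_add, pow_succ'] at this
    convert this using 2; ring
  have h3 : (1:ℂ) - a ≠ 0 := by
    have := hA 0; simpa using this
  have haq : a * q⁻¹ * q = a := by field_simp
  simp only [haq]
  -- Step 1 : LHS as a single sum over s
  have hswap : ∑ j ∈ Finset.range (n + 1), a ^ j * q ^ (j ^ 2 - j) / qPoch q q (n - j) * β j
      = ∑ s ∈ Finset.range (n+1), α s *
          (a^s * q^(s^2-s) / qPoch (a*q) q (2*s) *
            ((1 + a*q^(2*s) - a*q^(2*s) * q^(n-s)) /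
              (qPoch q q (n-s) * qPoch ((a*q^(2*s))*q) q (n-s)))) := by
    calc ∑ j ∈ Finset.range (n + 1), a ^ j * q ^ (j ^ 2 - j) / qPoch q q (n - j) * β j
        = ∑ j ∈ Finset.range (n+1), ∑ s ∈ Finset.range (n+1),
            (if s ≤ j then a^j * q^(j^2-j) / qPoch q q (n-j) *
              (α s / (qPoch q q (j-s) * qPoch (a*q) q (j+s))) else 0) := by
          apply Finset.sum_congr rfl
          intro j hj
          rw [h j, Finset.mul_sum]
          have hsub : Finset.range (j+1) ⊆ Finset.range (n+1) := by
            apply Finset.range_subset_range.mpr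
            have := Finset.mem_range.mp hj
            omega
          have e1 : ∀ s ∈ Finset.range (j+1),
              a^j * q^(j^2-j) / qPoch q q (n-j) *
                (α s / (qPoch q q (j-s) * qPoch (a*q) q (j+s)))
              = (if s ≤ j then a^j * q^(j^2-j) / qPoch q q (n-j) *
                  (α s / (qPoch q q (j-s) * qPoch (a*q) q (j+s))) else 0) := by
            intro s hs
            rw [if_pos (by have := Finset.mem_range.mp hs; omega)]
          rw [Finset.sum_congr rfl e1]
          exact Finset.sum_subset hsub (fun s _ hns => by
            rw [if_neg]
            intro hle
            exact hns (Finset.mem_range.mpr (by omega)))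
      _ = ∑ s ∈ Finset.range (n+1), ∑ j ∈ Finset.range (n+1),
            (if s ≤ j then a^j * q^(j^2-j) / qPoch q q (n-j) *
              (α s / (qPoch q q (j-s) * qPoch (a*q) q (j+s))) else 0) := Finset.sum_comm
      _ = _ := by
          apply Finset.sum_congr rfl
          intro s hs
          have hsn : s ≤ n := by have := Finset.mem_range.mp hs; omega
          rw [← Finset.sum_filter]
          have hfil : (Finset.range (n+1)).filter (fun j => s ≤ j) = Finset.Ico s (n+1) := by
            ext x
            simp [Finset.mem_filter, Finset.mem_Ico, Finset.mem_range, and_comm]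
          rw [hfil, Finset.sum_Ico_eq_sum_range,
            show n + 1 - s = (n-s)+1 by omega]
          have hterm : ∀ i ∈ Finset.range ((n-s)+1),
              a^(s+i) * q^((s+i)^2-(s+i)) / qPoch q q (n-(s+i)) *
                (α s / (qPoch q q ((s+i)-s) * qPoch (a*q) q ((s+i)+s)))
              = (α s * (a^s * q^(s^2-s) / qPoch (a*q) q (2*s))) *
                ((a*q^(2*s))^i * q^(i^2-i) /
                  (qPoch q q i * qPoch q q (n-s-i) * qPoch ((a*q^(2*s))*q) q i)) := by
            intro i hi
            have hexp : (s+i)^2 - (s+i) = (s^2-s) + ((i^2-i) + 2*s*i) := by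
              have e1 : (s+i)^2 = s^2 + 2*s*i + i^2 := by ring
              have e2 : s ≤ s^2 := Nat.le_self_pow (by norm_num) s
              have e3 : i ≤ i^2 := Nat.le_self_pow (by norm_num) i
              omega
            rw [show (s+i)-s = i by omega, show (s+i)+s = 2*s+i by omega,
              show n-(s+i) = n-s-i by omega, hexp,
              qPoch_add (a*q) q (2*s) i,
              show (a*q)*q^(2*s) = (a*q^(2*s))*q by ring]
            rw [pow_add a s i, pow_add q (s^2-s) ((i^2-i)+2*s*i), pow_add q (i^2-i) (2*s*i),
              mul_pow a (q^(2*s)) i, ← pow_mul q (2*s) i]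
            have n1 := hqprod i
            have n2 := hqprod (n-s-i)
            have n3 := haqne (2*s)
            have n4 := hbqne s i
            field_simp
          rw [Finset.sum_congr rfl hterm, ← Finset.mul_sum]
          have hbs : ∀ k : ℕ, 1 - (a*q^(2*s)) * q^(k+1) ≠ 0 := by
            intro k
            have := hA (2*s+(k+1)); rw [pow_add] at this
            convert this using 2; ring
          rw [key q hq' (n-s) (a*q^(2*s)) hbs, mul_assoc]
  rw [hswap]
  conv_rhs => rw [Finset.sum_range_succ']
  show _ = (∑ t ∈ Finset.range n,
      (a^(t+1) * q^((t+1)^2-(t+1)) *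
        ((1-a)/(1-a*q^(2*(t+1))) * α (t+1) - a*q^(2*t) * ((1-a)/(1-a*q^(2*t)) * α t)))
        / (qPoch q q (n-(t+1)) * qPoch a q (n+(t+1))))
    + α 0 / (qPoch q q (n-0) * qPoch a q (n+0))
  -- split each term of the sum into A and B parts
  have hAB : ∀ t ∈ Finset.range n,
      (a^(t+1) * q^((t+1)^2-(t+1)) *
        ((1-a)/(1-a*q^(2*(t+1))) * α (t+1) - a*q^(2*t) * ((1-a)/(1-a*q^(2*t)) * α t)))
        / (qPoch q q (n-(t+1)) * qPoch a q (n+(t+1)))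
      = a^(t+1) * q^((t+1)^2-(t+1)) * ((1-a)/(1-a*q^(2*(t+1))) * α (t+1))
          / (qPoch q q (n-(t+1)) * qPoch a q (n+(t+1)))
        - a^(t+1) * q^((t+1)^2-(t+1)) * (a*q^(2*t) * ((1-a)/(1-a*q^(2*t)) * α t))
          / (qPoch q q (n-(t+1)) * qPoch a q (n+(t+1))) := by
    intro t _
    ring
  rw [Finset.sum_congr rfl hAB, Finset.sum_sub_distrib]
  have hA0 : α 0 / (qPoch q q (n-0) * qPoch a q (n+0))
      = a^0 * q^(0^2-0) * ((1-a)/(1-a*q^(2*0)) * α 0) / (qPoch q q (n-0) * qPoch a q (n+0)) := by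
    norm_num [div_self h3]
  rw [hA0]
  rw [show (∑ t ∈ Finset.range n,
      a^(t+1) * q^((t+1)^2-(t+1)) * ((1-a)/(1-a*q^(2*(t+1))) * α (t+1))
        / (qPoch q q (n-(t+1)) * qPoch a q (n+(t+1))))
      = ∑ t ∈ Finset.range n, (fun s => a^s * q^(s^2-s) * ((1-a)/(1-a*q^(2*s)) * α s)
        / (qPoch q q (n-s) * qPoch a q (n+s))) (t+1) from rfl]
  rw [show (a^0 * q^(0^2-0) * ((1-a)/(1-a*q^(2*0)) * α 0) / (qPoch q q (n-0) * qPoch a q (n+0)))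
      = (fun s => a^s * q^(s^2-s) * ((1-a)/(1-a*q^(2*s)) * α s)
        / (qPoch q q (n-s) * qPoch a q (n+s))) 0 from rfl]
  have hglue := Finset.sum_range_succ' (fun s => a^s * q^(s^2-s) * ((1-a)/(1-a*q^(2*s)) * α s)
        / (qPoch q q (n-s) * qPoch a q (n+s))) n
  rw [sub_add_eq_add_sub, ← hglue]
  -- now goal : ∑ αG = ∑_{range (n+1)} A - ∑_{range n} B
  rw [Finset.sum_range_succ, Finset.sum_range_succ]
  have hlast : α n * (a^n * q^(n^2-n) / qPoch (a*q) q (2*n) *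
      ((1 + a*q^(2*n) - a*q^(2*n) * q^(n-n)) /
        (qPoch q q (n-n) * qPoch ((a*q^(2*n))*q) q (n-n))))
      = a^n * q^(n^2-n) * ((1-a)/(1-a*q^(2*n)) * α n) / (qPoch q q (n-n) * qPoch a q (n+n)) := by
    have hR1 : qPoch a q (2*n) * (1 - a*q^(2*n)) = (1-a) * qPoch (a*q) q (2*n) := by
      rw [← qPoch_succ, qPoch_succ']
    have hQ := haqne (2*n)
    have hR := hane (2*n)
    have h1 := hA (2*n)
    rw [Nat.sub_self, show n+n = 2*n+0 by omega, qPoch_add a q (2*n) 0]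
    simp only [qPoch_zero, pow_zero, mul_one, one_mul, div_one]
    exact alg4 a (q^(2*n)) (α n) (a^n) (q^(n^2-n))
      (qPoch (a*q) q (2*n)) (qPoch a q (2*n)) hQ hR h1 hR1
  have hmid : ∀ s ∈ Finset.range n,
      α s * (a^s * q^(s^2-s) / qPoch (a*q) q (2*s) *
        ((1 + a*q^(2*s) - a*q^(2*s) * q^(n-s)) /
          (qPoch q q (n-s) * qPoch ((a*q^(2*s))*q) q (n-s))))
      = a^s * q^(s^2-s) * ((1-a)/(1-a*q^(2*s)) * α s) / (qPoch q q (n-s) * qPoch a q (n+s))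
        - a^(s+1) * q^((s+1)^2-(s+1)) * (a*q^(2*s) * ((1-a)/(1-a*q^(2*s)) * α s))
          / (qPoch q q (n-(s+1)) * qPoch a q (n+(s+1))) := by
    intro s hs
    have hsn : s < n := Finset.mem_range.mp hs
    have hPeq : qPoch q q (n-s) = qPoch q q (n-s-1) * (1 - q^(n-s)) := by
      have h0 := qPoch_succ q q (n-s-1)
      rw [← pow_succ'] at h0
      rwa [show n-s-1+1 = n-s by omega] at h0
    have hadd1 : qPoch a q (n+s) = qPoch a q (2*s) * qPoch (a*q^(2*s)) q (n-s) := by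
      rw [show n+s = 2*s+(n-s) by omega, qPoch_add]
    have hadd2 : qPoch a q (n+(s+1))
        = qPoch a q (2*s) * (qPoch (a*q^(2*s)) q (n-s) * (1 - (a*q^(2*s))*q^(n-s))) := by
      rw [show n+(s+1) = 2*s+((n-s)+1) by omega, qPoch_add, qPoch_succ]
    have hidx : n-(s+1) = n-s-1 := by omega
    have hexp : (s+1)^2-(s+1) = (s^2-s)+2*s := by
      have e1 : (s+1)^2 = s^2+2*s+1 := by ring
      have e2 : s ≤ s^2 := Nat.le_self_pow (by norm_num) s
      omega
    have hR1 : qPoch a q (2*s) * (1 - a*q^(2*s)) = (1-a) * qPoch (a*q) q (2*s) := by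
      rw [← qPoch_succ, qPoch_succ']
    have hR2 : qPoch (a*q^(2*s)) q (n-s) * (1 - (a*q^(2*s))*q^(n-s))
        = (1 - a*q^(2*s)) * qPoch ((a*q^(2*s))*q) q (n-s) := by
      rw [← qPoch_succ, qPoch_succ']
    have hz : (1:ℂ) - q^(n-s) ≠ 0 := by
      have := hq' (n-s-1)
      rwa [show (n-s-1)+1 = n-s by omega] at this
    have h2' : (1:ℂ) - (a*q^(2*s))*q^(n-s) ≠ 0 := by
      have := hA (2*s+(n-s)); rw [pow_add] at this
      convert this using 2; ring
    rw [hPeq, hadd1, hadd2, hidx, hexp, pow_add q (s^2-s) (2*s), pow_succ a s]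
    exact alg3 a (q^(2*s)) (q^(n-s)) (α s) (a^s) (q^(s^2-s))
      (qPoch q q (n-s-1)) (qPoch (a*q) q (2*s)) (qPoch a q (2*s))
      (qPoch (a*q^(2*s)) q (n-s)) (qPoch ((a*q^(2*s))*q) q (n-s))
      (haqne (2*s)) (hqprod (n-s-1)) (hane (2*s)) (hbne s (n-s)) (hbqne s (n-s))
      (hA (2*s)) h2' h3 hz hR1 hR2
  rw [Finset.sum_congr rfl hmid, Finset.sum_sub_distrib]
  linear_combination hlast
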